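/- arXiv:2410.05504 — 3 statements merged into one kernel-verified Lean document; each statement's English description precedes it below -/
import Mathlib

section
/- Characterization of strict benefit via the auxiliary program: There exists an obedient ambiguous experiment (σ, μ) with U_s(σ, μ, τ*) > u_s^BP if, and only if, Φ*(u_s^BP) > 0, where Φ*(u) is the supremum of Σ_θ λ_θ Φ_u(σ_θ) over finite families (λ_θ, σ_θ) with λ_θ ≥ 0, Σ_θ λ_θ = 1, each σ_θ an experiment, and Σ_θ λ_θ σ_θ obedient, and Φ_u(σ) := (φ_s(u_s(σ,τ*)) − φ_s(u)) / φ_r'(u_r(σ,τ*)). (More generally, for every u ∈ ℝ, the value of (P) exceeds u if and only if Φ*(u) > 0.) -/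
open Finset

/-- A stochastic kernel from `X` to `Y`: each row `k x` is a probability vector on `Y`.
An experiment is a kernel from states `Ω` to messages; a receiver strategy is a kernel
from messages to actions `A`. -/
def IsKernel {X Y : Type*} [Fintype Y] (k : X → Y → ℝ) : Prop :=
  (∀ x y, 0 ≤ k x y) ∧ ∀ x, ∑ y, k x y = 1

/-- A probability vector on a finite type. -/
def IsProb {Θ : Type*} [Fintype Θ] (μ : Θ → ℝ) : Prop :=
  (∀ θ, 0 ≤ μ θ) ∧ ∑ θ, μ θ = 1

/-- The obedient strategy `τ*`: take the recommended action with probability one. -/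
noncomputable def tauStar {A : Type*} [DecidableEq A] : A → A → ℝ :=
  fun m a => if a = m then (1 : ℝ) else 0

/-- Expected payoff `u_i(σ, τ) = ∑_{ω,m,a} p(ω) σ(m|ω) τ(a|m) u_i(a,ω)`. -/
noncomputable def expPayoff {Ω M A : Type*} [Fintype Ω] [Fintype M] [Fintype A]
    (p : Ω → ℝ) (u : A → Ω → ℝ) (σ : Ω → M → ℝ) (τ : M → A → ℝ) : ℝ :=
  ∑ ω, ∑ m, ∑ a, p ω * σ ω m * τ m a * u a ω

/-- Obedience of a single (unambiguous) canonical experiment: `τ*` is a best reply. -/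
def Obedient {Ω A : Type*} [Fintype Ω] [Fintype A] [DecidableEq A]
    (p : Ω → ℝ) (ur : A → Ω → ℝ) (σ : Ω → A → ℝ) : Prop :=
  ∀ τ : A → A → ℝ, IsKernel τ → expPayoff p ur σ τ ≤ expPayoff p ur σ tauStar

/-- Obedience of an ambiguous experiment `(σ, μ)` for a smooth-ambiguity receiver with
index `φr`:  `τ*` maximizes `τ ↦ U_r(σ, μ, τ) = φr⁻¹(∑_θ μ_θ φr(u_r(σ_θ, τ)))`; since `φr`
is strictly increasing this is equivalent to `τ*` maximizing `τ ↦ ∑_θ μ_θ φr(u_r(σ_θ, τ))`. -/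
def AmbObedient {Ω A Θ : Type*} [Fintype Ω] [Fintype A] [DecidableEq A] [Fintype Θ]
    (φr : ℝ → ℝ) (p : Ω → ℝ) (ur : A → Ω → ℝ) (σ : Θ → Ω → A → ℝ) (μ : Θ → ℝ) : Prop :=
  ∀ τ : A → A → ℝ, IsKernel τ →
    ∑ θ, μ θ * φr (expPayoff p ur (σ θ) τ) ≤ ∑ θ, μ θ * φr (expPayoff p ur (σ θ) tauStar)

/-- A smooth ambiguity index: strictly increasing, concave, differentiable. -/
def SmoothIndex (φ : ℝ → ℝ) : Prop :=
  StrictMono φ ∧ ConcaveOn ℝ Set.univ φ ∧ Differentiable ℝ φ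

/-- Two experiments are (strictly) Pareto ranked: under obedience, sender and receiver
strictly rank them the same way. -/
def ParetoRanked {Ω A : Type*} [Fintype Ω] [Fintype A] [DecidableEq A]
    (p : Ω → ℝ) (us ur : A → Ω → ℝ) (σ σ' : Ω → A → ℝ) : Prop :=
  (expPayoff p us σ' tauStar < expPayoff p us σ tauStar ∧
      expPayoff p ur σ' tauStar < expPayoff p ur σ tauStar) ∨
  (expPayoff p us σ tauStar < expPayoff p us σ' tauStar ∧
      expPayoff p ur σ tauStar < expPayoff p ur σ' tauStar)

/-- Two experiments are weakly Pareto ranked. -/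
def WeaklyParetoRanked {Ω A : Type*} [Fintype Ω] [Fintype A] [DecidableEq A]
    (p : Ω → ℝ) (us ur : A → Ω → ℝ) (σ σ' : Ω → A → ℝ) : Prop :=
  (expPayoff p us σ' tauStar ≤ expPayoff p us σ tauStar ∧
      expPayoff p ur σ' tauStar ≤ expPayoff p ur σ tauStar) ∨
  (expPayoff p us σ tauStar ≤ expPayoff p us σ' tauStar ∧
      expPayoff p ur σ tauStar ≤ expPayoff p ur σ' tauStar)

/-- Pointwise convex combination of two experiments. -/
noncomputable def mixExp {Ω A : Type*} (lam : ℝ) (σ1 σ2 : Ω → A → ℝ) : Ω → A → ℝ :=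
  fun ω a => lam * σ1 ω a + (1 - lam) * σ2 ω a

/-- `(σbar, σlo, lam)` is a Pareto-ranked splitting of the experiment `σ`. -/
def ParetoRankedSplitting {Ω A : Type*} [Fintype Ω] [Fintype A] [DecidableEq A]
    (p : Ω → ℝ) (us ur : A → Ω → ℝ) (σbar σlo : Ω → A → ℝ) (lam : ℝ) (σ : Ω → A → ℝ) : Prop :=
  IsKernel σbar ∧ IsKernel σlo ∧ lam ∈ Set.Ioo (0 : ℝ) 1 ∧
    mixExp lam σbar σlo = σ ∧ ParetoRanked p us ur σbar σlo

/-- The `((σbar, σlo), lam)`-probability premium of a player with utility `u` and index `φ`. -/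
noncomputable def probPremium {Ω A : Type*} [Fintype Ω] [Fintype A] [DecidableEq A]
    (p : Ω → ℝ) (u : A → Ω → ℝ) (φ : ℝ → ℝ) (σbar σlo : Ω → A → ℝ) (lam : ℝ) : ℝ :=
  (φ (expPayoff p u (mixExp lam σbar σlo) tauStar) -
      lam * φ (expPayoff p u σbar tauStar) - (1 - lam) * φ (expPayoff p u σlo tauStar)) /
    (φ (expPayoff p u σbar tauStar) - φ (expPayoff p u σlo tauStar))

/-- The set of `φs`-transformed sender values attainable by obedient ambiguous experiments;
the value of the sender's problem `(P)` equals `u` iff `φs u` is the least upper bound of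
this set (since `φs` is continuous and strictly increasing). -/
def senderValues {Ω A : Type*} [Fintype Ω] [Fintype A] [DecidableEq A]
    (φs φr : ℝ → ℝ) (p : Ω → ℝ) (us ur : A → Ω → ℝ) : Set ℝ :=
  {x | ∃ (n : ℕ) (σ : Fin n → Ω → A → ℝ) (μ : Fin n → ℝ),
    (∀ j, IsKernel (σ j)) ∧ IsProb μ ∧ AmbObedient φr p ur σ μ ∧
    x = ∑ j, μ j * φs (expPayoff p us (σ j) tauStar)}

/-- The set of feasible values of the auxiliary program `(Φ*(u))`: sums
`∑_θ λ_θ Φ_u(σ_θ)` over splittings `(λ_θ, σ_θ)` of obedient experiments, where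
`Φ_u(σ) = (φs(u_s(σ,τ*)) − φs(u)) / φr'(u_r(σ,τ*))`. -/
def phiProgram {Ω A : Type*} [Fintype Ω] [Fintype A] [DecidableEq A]
    (φs φr : ℝ → ℝ) (p : Ω → ℝ) (us ur : A → Ω → ℝ) (u : ℝ) : Set ℝ :=
  {x | ∃ (n : ℕ) (σ : Fin n → Ω → A → ℝ) (lam : Fin n → ℝ),
    (∀ j, IsKernel (σ j)) ∧ IsProb lam ∧
    Obedient p ur (fun ω a => ∑ j, lam j * σ j ω a) ∧
    x = ∑ j, lam j * ((φs (expPayoff p us (σ j) tauStar) - φs u) /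
      deriv φr (expPayoff p ur (σ j) tauStar))}

section Helpers

lemma expPayoff_sum_left {Ω M A : Type*} [Fintype Ω] [Fintype M] [Fintype A]
    (p : Ω → ℝ) (u : A → Ω → ℝ) {n : ℕ} (σ : Fin n → Ω → M → ℝ) (lam : Fin n → ℝ)
    (τ : M → A → ℝ) :
    expPayoff p u (fun ω m => ∑ j, lam j * σ j ω m) τ
      = ∑ j, lam j * expPayoff p u (σ j) τ := by
  have swap : ∀ (f : Ω → M → A → Fin n → ℝ),
      (∑ ω, ∑ m, ∑ a, ∑ j, f ω m a j) = ∑ j, ∑ ω, ∑ m, ∑ a, f ω m a j := by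
    intro f
    calc (∑ ω, ∑ m, ∑ a, ∑ j, f ω m a j)
        = ∑ ω, ∑ m, ∑ j, ∑ a, f ω m a j :=
          Finset.sum_congr rfl fun ω _ => Finset.sum_congr rfl fun m _ => Finset.sum_comm
      _ = ∑ ω, ∑ j, ∑ m, ∑ a, f ω m a j :=
          Finset.sum_congr rfl fun ω _ => Finset.sum_comm
      _ = ∑ j, ∑ ω, ∑ m, ∑ a, f ω m a j := Finset.sum_comm
  unfold expPayoff
  calc (∑ ω, ∑ m, ∑ a, p ω * (∑ j, lam j * σ j ω m) * τ m a * u a ω)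
      = ∑ ω, ∑ m, ∑ a, ∑ j, lam j * (p ω * σ j ω m * τ m a * u a ω) := by
        refine Finset.sum_congr rfl fun ω _ => Finset.sum_congr rfl fun m _ =>
          Finset.sum_congr rfl fun a _ => ?_
        rw [Finset.mul_sum, Finset.sum_mul, Finset.sum_mul]
        exact Finset.sum_congr rfl fun j _ => by ring
    _ = ∑ j, ∑ ω, ∑ m, ∑ a, lam j * (p ω * σ j ω m * τ m a * u a ω) := swap _
    _ = ∑ j, lam j * ∑ ω, ∑ m, ∑ a, p ω * σ j ω m * τ m a * u a ω := by
        refine Finset.sum_congr rfl fun j _ => ?_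
        simp only [Finset.mul_sum]

lemma expPayoff_tau_affine {Ω M A : Type*} [Fintype Ω] [Fintype M] [Fintype A]
    (p : Ω → ℝ) (u : A → Ω → ℝ) (σ : Ω → M → ℝ) (τ1 τ2 : M → A → ℝ) (c1 c2 : ℝ) :
    expPayoff p u σ (fun m a => c1 * τ1 m a + c2 * τ2 m a)
      = c1 * expPayoff p u σ τ1 + c2 * expPayoff p u σ τ2 := by
  unfold expPayoff
  simp only [Finset.mul_sum, ← Finset.sum_add_distrib]
  refine Finset.sum_congr rfl fun ω _ => Finset.sum_congr rfl fun m _ =>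
    Finset.sum_congr rfl fun a _ => by ring


lemma tangent_le {φ : ℝ → ℝ} (hc : ConcaveOn ℝ Set.univ φ) (hd : Differentiable ℝ φ)
    (w v : ℝ) : φ v ≤ φ w + deriv φ w * (v - w) := by
  rcases lt_trichotomy v w with h | h | h
  · have h0 := hc.deriv_le_slope (Set.mem_univ v) (Set.mem_univ w) h (hd w)
    rw [slope_def_field] at h0
    have h2 : 0 < w - v := by linarith
    rw [le_div_iff₀ h2] at h0
    nlinarith
  · simp [h]
  · have h0 := hc.slope_le_deriv (Set.mem_univ w) (Set.mem_univ v) h (hd w)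
    rw [slope_def_field] at h0
    have h2 : 0 < v - w := by linarith
    rw [div_le_iff₀ h2] at h0
    nlinarith

lemma deriv_nonpos_of_le {g : ℝ → ℝ} {d : ℝ} (hg : HasDerivAt g d 0)
    (h : ∀ t ∈ Set.Ioc (0:ℝ) 1, g t ≤ g 0) : d ≤ 0 := by
  have hs := hasDerivAt_iff_tendsto_slope.mp hg
  have hs' : Filter.Tendsto (slope g 0) (nhdsWithin 0 (Set.Ioi 0)) (nhds d) :=
    hs.mono_left (nhdsWithin_mono _ (fun x hx => ne_of_gt hx))
  refine le_of_tendsto hs' ?_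
  filter_upwards [Ioc_mem_nhdsGT_of_mem (by norm_num : (0:ℝ) ∈ Set.Ico (0:ℝ) 1)] with t ht
  have h1 := h t ht
  rw [slope_def_field]
  exact div_nonpos_of_nonpos_of_nonneg (by linarith) (by linarith [ht.1])

lemma isKernel_tauStar {A : Type*} [Fintype A] [DecidableEq A] :
    IsKernel (tauStar (A := A)) := by
  constructor
  · intro m a
    unfold tauStar
    split <;> norm_num
  · intro m
    simp [tauStar]

lemma isKernel_mix {Ω A : Type*} [Fintype Ω] [Fintype A] {n : ℕ}
    {σ : Fin n → Ω → A → ℝ} {lam : Fin n → ℝ}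
    (hσ : ∀ j, IsKernel (σ j)) (hlam : IsProb lam) :
    IsKernel (fun ω a => ∑ j, lam j * σ j ω a) := by
  constructor
  · intro ω a
    exact Finset.sum_nonneg fun j _ => mul_nonneg (hlam.1 j) ((hσ j).1 ω a)
  · intro ω
    rw [Finset.sum_comm]
    calc (∑ j, ∑ a, lam j * σ j ω a) = ∑ j, lam j * ∑ a, σ j ω a := by
          exact Finset.sum_congr rfl fun j _ => (Finset.mul_sum _ _ _).symm
      _ = ∑ j, lam j := Finset.sum_congr rfl fun j _ => by rw [(hσ j).2 ω, mul_one]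
      _ = 1 := hlam.2

lemma exists_pos_of_isProb {n : ℕ} {μ : Fin n → ℝ} (h : IsProb μ) : ∃ j, 0 < μ j := by
  by_contra hc
  push_neg at hc
  have h0 : ∀ j ∈ Finset.univ, μ j = 0 := fun j _ => le_antisymm (hc j) (h.1 j)
  have := h.2
  rw [Finset.sum_eq_zero h0] at this
  norm_num at this

end Helpers

/-- Corollary 5 / Lemma A.2: ambiguous communication benefits the sender —
some obedient ambiguous experiment has `U_s > u_s^BP` (equivalently, some element of the
`φs`-transformed sender-value set exceeds `φs u_s^BP`) — iff the program `(Φ*(u_s^BP))`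
has value `> 0` (equivalently, some feasible value is `> 0`).  More generally, for every
`u`, the value of `(P)` exceeds `u` iff `Φ*(u) > 0`. -/
theorem strict_benefit_characterization
    {Ω A : Type*} [Fintype Ω] [Fintype A] [DecidableEq A]
    (p : Ω → ℝ) (hp : IsProb p) (us ur : A → Ω → ℝ)
    (φs φr : ℝ → ℝ) (hφs : SmoothIndex φs) (hφr : SmoothIndex φr)
    (hφr' : ∀ x, 0 < deriv φr x)
    (usBP : ℝ)
    (husBP : IsGreatest {x : ℝ | ∃ σ0 : Ω → A → ℝ,
      IsKernel σ0 ∧ Obedient p ur σ0 ∧ x = expPayoff p us σ0 tauStar} usBP) :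
    ((∃ x ∈ senderValues φs φr p us ur, φs usBP < x) ↔
      ∃ y ∈ phiProgram φs φr p us ur usBP, 0 < y) ∧
    (∀ u : ℝ, (∃ x ∈ senderValues φs φr p us ur, φs u < x) ↔
      ∃ y ∈ phiProgram φs φr p us ur u, 0 < y) := by
  suffices hGen : ∀ u : ℝ, (∃ x ∈ senderValues φs φr p us ur, φs u < x) ↔
      ∃ y ∈ phiProgram φs φr p us ur u, 0 < y from ⟨hGen usBP, hGen⟩
  intro u
  constructor
  · -- from strict benefit to positive auxiliary value
    rintro ⟨x, ⟨n, σ, μ, hker, hμ, hobed, hx⟩, hlt⟩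
    set s : Fin n → ℝ := fun j => expPayoff p us (σ j) tauStar with hs
    set w : Fin n → ℝ := fun j => expPayoff p ur (σ j) tauStar with hw
    set d : Fin n → ℝ := fun j => deriv φr (w j) with hd
    have hdpos : ∀ j, 0 < d j := fun j => hφr' _
    set C : ℝ := ∑ j, μ j * d j with hC
    have hCpos : 0 < C := by
      obtain ⟨j0, hj0⟩ := exists_pos_of_isProb hμ
      exact Finset.sum_pos' (fun j _ => mul_nonneg (hμ.1 j) (hdpos j).le)
        ⟨j0, Finset.mem_univ j0, mul_pos hj0 (hdpos j0)⟩
    refine ⟨∑ j, (μ j * d j / C) * ((φs (s j) - φs u) / d j),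
      ⟨n, σ, fun j => μ j * d j / C, hker, ?_, ?_, rfl⟩, ?_⟩
    · -- IsProb
      constructor
      · intro j
        exact div_nonneg (mul_nonneg (hμ.1 j) (hdpos j).le) hCpos.le
      · rw [← Finset.sum_div, ← hC, div_self hCpos.ne']
    · -- Obedience of the mixture
      intro τ hτ
      rw [expPayoff_sum_left, expPayoff_sum_left]
      set v : Fin n → ℝ := fun j => expPayoff p ur (σ j) τ with hv
      have key : (∑ j, μ j * (d j * (v j - w j))) ≤ 0 := by
        have hder : HasDerivAt (fun t => ∑ j, μ j * φr (w j + t * (v j - w j)))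
            (∑ j, μ j * (d j * (v j - w j))) 0 := by
          refine HasDerivAt.fun_sum fun j _ => ?_
          have h1 : HasDerivAt (fun t : ℝ => w j + t * (v j - w j)) (v j - w j) 0 := by
            simpa using ((hasDerivAt_id (0 : ℝ)).mul_const (v j - w j)).const_add (w j)
          have h2 : HasDerivAt φr (deriv φr (w j)) (w j + 0 * (v j - w j)) := by
            rw [show w j + 0 * (v j - w j) = w j by ring]
            exact (hφr.2.2 (w j)).hasDerivAt
          exact (h2.comp 0 h1).const_mul (μ j)
        refine deriv_nonpos_of_le hder ?_
        intro t ht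
        have hτt : IsKernel (fun m a => (1 - t) * tauStar m a + t * τ m a) := by
          constructor
          · intro m a
            have h1 := (isKernel_tauStar (A := A)).1 m a
            have h2 := hτ.1 m a
            show 0 ≤ (1 - t) * tauStar m a + t * τ m a
            exact add_nonneg (mul_nonneg (by linarith [ht.2]) h1)
              (mul_nonneg ht.1.le h2)
          · intro m
            rw [Finset.sum_add_distrib, ← Finset.mul_sum, ← Finset.mul_sum,
              isKernel_tauStar.2 m, hτ.2 m]
            ring
        have hob := hobed _ hτt
        have e1 : ∀ j, expPayoff p ur (σ j) (fun m a => (1 - t) * tauStar m a + t * τ m a)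
            = w j + t * (v j - w j) := by
          intro j
          rw [expPayoff_tau_affine, hw, hv]
          ring
        simp only [zero_mul, add_zero]
        calc (∑ j, μ j * φr (w j + t * (v j - w j)))
            = ∑ j, μ j * φr (expPayoff p ur (σ j)
                (fun m a => (1 - t) * tauStar m a + t * τ m a)) :=
              Finset.sum_congr rfl fun j _ => by rw [e1 j]
          _ ≤ ∑ j, μ j * φr (w j) := hob
      have e2 : (∑ j, (μ j * d j / C) * v j) - (∑ j, (μ j * d j / C) * w j)
          = (∑ j, μ j * (d j * (v j - w j))) / C := by
        rw [← Finset.sum_sub_distrib, Finset.sum_div]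
        exact Finset.sum_congr rfl fun j _ => by ring
      have := div_nonpos_of_nonpos_of_nonneg key hCpos.le
      linarith
    · -- positivity of the auxiliary value
      have e3 : (∑ j, (μ j * d j / C) * ((φs (s j) - φs u) / d j))
          = ((∑ j, μ j * φs (s j)) - φs u) / C := by
        have e4 : ∀ j ∈ Finset.univ, (μ j * d j / C) * ((φs (s j) - φs u) / d j)
            = (μ j * φs (s j) - μ j * φs u) / C := by
          intro j _
          field_simp [(hdpos j).ne', hCpos.ne']
        rw [Finset.sum_congr rfl e4, ← Finset.sum_div, Finset.sum_sub_distrib,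
          ← Finset.sum_mul, hμ.2, one_mul]
      rw [e3]
      apply div_pos _ hCpos
      rw [← hx]
      linarith
  · -- from positive auxiliary value to strict benefit
    rintro ⟨y, ⟨n, σ, lam, hker, hlam, hobed, hy⟩, hypos⟩
    set s : Fin n → ℝ := fun j => expPayoff p us (σ j) tauStar with hs
    set w : Fin n → ℝ := fun j => expPayoff p ur (σ j) tauStar with hw
    set d : Fin n → ℝ := fun j => deriv φr (w j) with hd
    have hdpos : ∀ j, 0 < d j := fun j => hφr' _
    set N : ℝ := ∑ j, lam j / d j with hN
    have hNpos : 0 < N := by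
      obtain ⟨j0, hj0⟩ := exists_pos_of_isProb hlam
      exact Finset.sum_pos' (fun j _ => div_nonneg (hlam.1 j) (hdpos j).le)
        ⟨j0, Finset.mem_univ j0, div_pos hj0 (hdpos j0)⟩
    have hμprob : IsProb (fun j => lam j / d j / N) := by
      constructor
      · intro j
        exact div_nonneg (div_nonneg (hlam.1 j) (hdpos j).le) hNpos.le
      · rw [← Finset.sum_div, ← hN, div_self hNpos.ne']
    refine ⟨∑ j, (lam j / d j / N) * φs (s j), ⟨n, σ, fun j => lam j / d j / N,
      hker, hμprob, ?_, rfl⟩, ?_⟩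
    · -- AmbObedient
      intro τ hτ
      set v : Fin n → ℝ := fun j => expPayoff p ur (σ j) τ with hv
      have tangent : ∀ j, φr (v j) ≤ φr (w j) + d j * (v j - w j) := fun j =>
        tangent_le hφr.2.1 hφr.2.2 (w j) (v j)
      have step1 : (∑ j, (lam j / d j / N) * φr (v j))
          ≤ ∑ j, (lam j / d j / N) * (φr (w j) + d j * (v j - w j)) :=
        Finset.sum_le_sum fun j _ =>
          mul_le_mul_of_nonneg_left (tangent j) (hμprob.1 j)
      have step2 : (∑ j, (lam j / d j / N) * (φr (w j) + d j * (v j - w j)))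
          = (∑ j, (lam j / d j / N) * φr (w j)) + (∑ j, lam j * (v j - w j)) / N := by
        have e5 : ∀ j ∈ Finset.univ, (lam j / d j / N) * (φr (w j) + d j * (v j - w j))
            = (lam j / d j / N) * φr (w j) + (lam j * (v j - w j)) / N := by
          intro j _
          field_simp [(hdpos j).ne', hNpos.ne']
        rw [Finset.sum_congr rfl e5, Finset.sum_add_distrib, ← Finset.sum_div]
      have step3 : (∑ j, lam j * (v j - w j)) ≤ 0 := by
        have hob := hobed τ hτ
        rw [expPayoff_sum_left, expPayoff_sum_left] at hob
        have : (∑ j, lam j * (v j - w j))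
            = (∑ j, lam j * v j) - ∑ j, lam j * w j := by
          rw [← Finset.sum_sub_distrib]
          exact Finset.sum_congr rfl fun j _ => by ring
        rw [this]
        linarith
      have := div_nonpos_of_nonpos_of_nonneg step3 hNpos.le
      calc (∑ j, (lam j / d j / N) * φr (v j))
          ≤ (∑ j, (lam j / d j / N) * φr (w j)) + (∑ j, lam j * (v j - w j)) / N := by
            rw [← step2]; exact step1
        _ ≤ ∑ j, (lam j / d j / N) * φr (w j) := by linarith
    · -- strict benefit
      have e6 : (∑ j, (lam j / d j / N) * φs (s j)) - φs u = y / N := by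
        have e7 : ∀ j ∈ Finset.univ, (lam j / d j / N) * φs (s j) - (lam j / d j / N) * φs u
            = (lam j * ((φs (s j) - φs u) / d j)) / N := by
          intro j _
          field_simp [(hdpos j).ne', hNpos.ne']
        have e8 : φs u = ∑ j, (lam j / d j / N) * φs u := by
          rw [← Finset.sum_mul, hμprob.2, one_mul]
        rw [e8, ← Finset.sum_sub_distrib, Finset.sum_congr rfl e7, ← Finset.sum_div, ← hy]
      have := div_pos hypos hNpos
      linarith
end

section
/- Pessimistic reweighting strictly lowers expectation: Fix n ≥ 2, real sequences x₁ ≥ x₂ ≥ … ≥ x_n and 0 < y₁ ≤ y₂ ≤ … ≤ y_n, and a probability vector μ ∈ Δ({1,…,n}). Assume there exist indices i* < j* with μ_{i*} > 0, μ_{j*} > 0, x_{i*} > x_{j*}, and y_{i*} < y_{j*}. Then Σ_{i=1}^{n} x_i · (μ_i y_i / Σ_{j=1}^{n} μ_j y_j) < Σ_{i=1}^{n} x_i μ_i. -/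
open Finset

/-- Lemma A.6: pessimistic reweighting strictly lowers the expectation of
a decreasing sequence `x` by the weights proportional to `μ_i y_i` with `y` positive
increasing, provided some pair of indices carries positive weight and strict movement. -/
theorem pessimistic_reweighting_lowers_expectation
    (n : ℕ) (hn : 2 ≤ n) (x y μ : Fin n → ℝ)
    (hx : ∀ i j : Fin n, i ≤ j → x j ≤ x i)
    (hy0 : ∀ i, 0 < y i) (hy : ∀ i j : Fin n, i ≤ j → y i ≤ y j)
    (hμ0 : ∀ i, 0 ≤ μ i) (hμ1 : ∑ i, μ i = 1)
    (istar jstar : Fin n) (hij : istar < jstar)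
    (hμi : 0 < μ istar) (hμj : 0 < μ jstar)
    (hxij : x jstar < x istar) (hyij : y istar < y jstar) :
    ∑ i, x i * (μ i * y i / ∑ j, μ j * y j) < ∑ i, x i * μ i := by
  set S := ∑ j, μ j * y j with hS
  have hS0 : 0 < S := Finset.sum_pos' (fun i _ => mul_nonneg (hμ0 i) (hy0 i).le)
    ⟨istar, Finset.mem_univ _, mul_pos hμi (hy0 istar)⟩
  have key : 0 < ∑ p : Fin n × Fin n, μ p.1 * μ p.2 * ((x p.1 - x p.2) * (y p.2 - y p.1)) := by
    apply Finset.sum_pos'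
    · intro p _
      rcases le_total p.1 p.2 with h | h
      · exact mul_nonneg (mul_nonneg (hμ0 _) (hμ0 _))
          (mul_nonneg (sub_nonneg.2 (hx _ _ h)) (sub_nonneg.2 (hy _ _ h)))
      · exact mul_nonneg (mul_nonneg (hμ0 _) (hμ0 _))
          (mul_nonneg_of_nonpos_of_nonpos (sub_nonpos.2 (hx _ _ h)) (sub_nonpos.2 (hy _ _ h)))
    · exact ⟨(istar, jstar), Finset.mem_univ _,
        mul_pos (mul_pos hμi hμj) (mul_pos (sub_pos.2 hxij) (sub_pos.2 hyij))⟩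
  have hsplit : ∑ p : Fin n × Fin n, μ p.1 * μ p.2 * ((x p.1 - x p.2) * (y p.2 - y p.1))
      = ∑ i, ∑ j, μ i * μ j * ((x i - x j) * (y j - y i)) :=
    Fintype.sum_prod_type _
  have hA : ∑ i, ∑ j, (μ i * x i) * (μ j * y j) = (∑ i, x i * μ i) * S := by
    rw [hS, ← Finset.sum_mul_sum]
    congr 1
    exact Finset.sum_congr rfl (fun i _ => by ring)
  have hA' : ∑ i, ∑ j, (μ j * x j) * (μ i * y i) = (∑ i, x i * μ i) * S := by
    rw [Finset.sum_comm]; exact hA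
  have hB : ∑ i, ∑ j, (μ i * (x i * y i)) * μ j = ∑ i, x i * (μ i * y i) := by
    refine Finset.sum_congr rfl (fun i _ => ?_)
    rw [← Finset.mul_sum, hμ1]; ring
  have hB' : ∑ i, ∑ j, (μ j * (x j * y j)) * μ i = ∑ i, x i * (μ i * y i) := by
    rw [Finset.sum_comm]; exact hB
  have expand : ∑ i, ∑ j, μ i * μ j * ((x i - x j) * (y j - y i))
      = 2 * ((∑ i, x i * μ i) * S) - 2 * (∑ i, x i * (μ i * y i)) := by
    have h1 : ∀ i j : Fin n, μ i * μ j * ((x i - x j) * (y j - y i))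
        = (μ i * x i) * (μ j * y j) + (μ j * x j) * (μ i * y i)
          - (μ i * (x i * y i)) * μ j - (μ j * (x j * y j)) * μ i := by
      intro i j; ring
    simp_rw [h1, Finset.sum_sub_distrib, Finset.sum_add_distrib]
    rw [hA, hA', hB, hB']; ring
  have hBA : ∑ i, x i * (μ i * y i) < (∑ i, x i * μ i) * S := by
    nlinarith [key, hsplit, expand]
  calc ∑ i, x i * (μ i * y i / S) = (∑ i, x i * (μ i * y i)) / S := by
        rw [Finset.sum_div]
        exact Finset.sum_congr rfl (fun i _ => by ring)
    _ < ∑ i, x i * μ i := (div_lt_iff₀ hS0).2 hBA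
end

section
/- Existence of a Pareto-ranked splitting from a Pareto-dominating experiment with contained support: Let σ be an experiment. If there exists an experiment σ̂ such that u_s(σ̂, τ*) > u_s(σ, τ*), u_r(σ̂, τ*) > u_r(σ, τ*), and for every ω ∈ Ω the support of σ̂(·|ω) is contained in the support of σ(·|ω), then there exists λ ∈ (0,1) and an experiment σ̲ such that (σ̂, σ̲, λ) is a Pareto-ranked splitting of σ, i.e., λσ̂ + (1−λ)σ̲ = σ and u_s(σ̂, τ*) > u_s(σ̲, τ*), u_r(σ̂, τ*) > u_r(σ̲, τ*). -/
open Finset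

private lemma expPayoff_mix {Ω A : Type*} [Fintype Ω] [Fintype A]
    (p : Ω → ℝ) (u : A → Ω → ℝ) (c1 c2 : ℝ) (σ1 σ2 : Ω → A → ℝ) (τ : A → A → ℝ) :
    expPayoff p u (fun ω a => c1 * σ1 ω a + c2 * σ2 ω a) τ =
      c1 * expPayoff p u σ1 τ + c2 * expPayoff p u σ2 τ := by
  simp only [expPayoff, Finset.mul_sum, ← Finset.sum_add_distrib]
  refine Finset.sum_congr rfl fun ω _ => Finset.sum_congr rfl fun m _ =>
    Finset.sum_congr rfl fun a _ => ?_
  ring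

/-- Lemma A.7: if `σhat` strictly Pareto-dominates the experiment `σ`
(under obedience) and, for every `ω`, the support of `σhat(·|ω)` is contained in the
support of `σ(·|ω)`, then there are `lam ∈ (0,1)` and an experiment `σlo` with
`lam·σhat + (1−lam)·σlo = σ` and `σhat` strictly Pareto-dominating `σlo`, i.e.
`(σhat, σlo, lam)` is a Pareto-ranked splitting of `σ`. -/
theorem pareto_ranked_splitting_from_dominating_experiment
    {Ω A : Type*} [Fintype Ω] [Fintype A] [DecidableEq A]
    (p : Ω → ℝ) (hp : IsProb p) (us ur : A → Ω → ℝ)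
    (σ σhat : Ω → A → ℝ) (hσ : IsKernel σ) (hσhat : IsKernel σhat)
    (hus : expPayoff p us σ tauStar < expPayoff p us σhat tauStar)
    (hur : expPayoff p ur σ tauStar < expPayoff p ur σhat tauStar)
    (hsupp : ∀ ω a, 0 < σhat ω a → 0 < σ ω a) :
    ∃ (lam : ℝ) (σlo : Ω → A → ℝ), lam ∈ Set.Ioo (0 : ℝ) 1 ∧ IsKernel σlo ∧
      (∀ ω a, lam * σhat ω a + (1 - lam) * σlo ω a = σ ω a) ∧
      expPayoff p us σlo tauStar < expPayoff p us σhat tauStar ∧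
      expPayoff p ur σlo tauStar < expPayoff p ur σhat tauStar := by
  -- degenerate case: Ω × A empty
  by_cases hne : Nonempty (Ω × A)
  swap
  · exfalso
    rcases not_nonempty_iff.mp hne with h
    have hΩA : IsEmpty Ω ∨ IsEmpty A := by
      by_contra hc
      push_neg at hc
      exact h.elim ⟨hc.1.some, hc.2.some⟩
    rcases hΩA with hΩ | hA
    · simp [expPayoff, Finset.univ_eq_empty] at hus
    · have hΩ : Nonempty Ω := by
        by_contra hΩ'
        rw [not_nonempty_iff] at hΩ'
        simp [expPayoff, Finset.univ_eq_empty] at hus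
      have := hσ.2 hΩ.some
      simp [Finset.univ_eq_empty] at this
  · -- main case
    set f : Ω × A → ℝ := fun q => if 0 < σhat q.1 q.2 then σ q.1 q.2 / σhat q.1 q.2 else 1
      with hf
    have hfin : (Finset.univ : Finset (Ω × A)).Nonempty := Finset.univ_nonempty
    set c : ℝ := Finset.univ.inf' hfin f with hc
    have hcpos : 0 < c := by
      rw [hc, Finset.lt_inf'_iff]
      intro q _
      rw [hf]
      dsimp only
      split
      · exact div_pos (hsupp q.1 q.2 (by assumption)) (by assumption)
      · exact one_pos
    set lam : ℝ := min c 1 / 2 with hlam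
    have hlam0 : 0 < lam := by positivity
    have hlam1 : lam < 1 := by
      have : min c 1 ≤ 1 := min_le_right _ _
      rw [hlam]; linarith
    have hle : ∀ ω a, lam * σhat ω a ≤ σ ω a := by
      intro ω a
      rcases lt_or_ge 0 (σhat ω a) with hpos | hz
      · have h1 : lam ≤ c := by
          have : min c 1 ≤ c := min_le_left _ _
          rw [hlam]; linarith
        have h2 : c ≤ σ ω a / σhat ω a := by
          have h3 := Finset.inf'_le f (Finset.mem_univ (ω, a))
          simp only [hf, if_pos hpos] at h3
          exact h3
        calc lam * σhat ω a ≤ (σ ω a / σhat ω a) * σhat ω a := by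
              exact mul_le_mul_of_nonneg_right (h1.trans h2) (le_of_lt hpos)
          _ = σ ω a := by field_simp
      · have : σhat ω a = 0 := le_antisymm hz (hσhat.1 ω a)
        rw [this, mul_zero]
        exact hσ.1 ω a
    have h1lam : (0:ℝ) < 1 - lam := by linarith
    refine ⟨lam, fun ω a => (σ ω a - lam * σhat ω a) / (1 - lam), ⟨hlam0, hlam1⟩, ?_, ?_, ?_, ?_⟩
    · constructor
      · intro ω a
        exact div_nonneg (by linarith [hle ω a]) h1lam.le
      · intro ω
        rw [← Finset.sum_div]
        rw [Finset.sum_sub_distrib, ← Finset.mul_sum, hσ.2 ω, hσhat.2 ω]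
        field_simp
    · intro ω a
      field_simp
      ring
    · have := expPayoff_mix p us lam (1 - lam) σhat
        (fun ω a => (σ ω a - lam * σhat ω a) / (1 - lam)) tauStar
      have heq : (fun ω a => lam * σhat ω a +
          (1 - lam) * ((σ ω a - lam * σhat ω a) / (1 - lam))) = σ := by
        funext ω a; field_simp; ring
      rw [heq] at this
      nlinarith [this]
    · have := expPayoff_mix p ur lam (1 - lam) σhat
        (fun ω a => (σ ω a - lam * σhat ω a) / (1 - lam)) tauStar
      have heq : (fun ω a => lam * σhat ω a +
          (1 - lam) * ((σ ω a - lam * σhat ω a) / (1 - lam))) = σ := by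
        funext ω a; field_simp; ring
      rw [heq] at this
      nlinarith [this]
end
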